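/- Let r, n₁, n₂, s₁, t₁, s₂, t₂ be positive integers and a, b > 0 real numbers. Suppose that every coloring of the edges of the complete bipartite graph K_{n₁,n₂} with r colors contains a rainbow copy of K_{s₁,t₁} with the s₁-side in the part of size n₁, or a monochromatic copy of K_{s₂,t₂} with the s₂-side in the part of size n₁. Let S₁ ⊂ E^{s₁+t₁} be the Cartesian product of a regular (s₁−1)-dimensional simplex of side length a and a regular (t₁−1)-dimensional simplex of side length b, and let S₂ ⊂ E^{s₂+t₂} be the Cartesian product of a regular (s₂−1)-dimensional simplex of side length a and a regular (t₂−1)-dimensional simplex of side length b. Then every coloring of the points of Euclidean space E^{n₁+n₂} with r colors contains a rainbow congruent copy of S₁ or a monochromatic congruent copy of S₂. -/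

import Mathlib

/-- The coloring `c` of the edges of `K_{n₁,n₂}` contains a monochromatic copy of `K_{s,t}`
with the `s`-side in the first part and the `t`-side in the second part. -/
def HasMonoKst {n₁ n₂ r : ℕ} (c : Fin n₁ × Fin n₂ → Fin r) (s t : ℕ) : Prop :=
  ∃ (A : Finset (Fin n₁)) (B : Finset (Fin n₂)), A.card = s ∧ B.card = t ∧
    ∀ a ∈ A, ∀ b ∈ B, ∀ a' ∈ A, ∀ b' ∈ B, c (a, b) = c (a', b')

/-- The coloring `c` of the edges of `K_{n₁,n₂}` contains a rainbow copy of `K_{s,t}`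
with the `s`-side in the first part and the `t`-side in the second part. -/
def HasRainbowKst {n₁ n₂ r : ℕ} (c : Fin n₁ × Fin n₂ → Fin r) (s t : ℕ) : Prop :=
  ∃ (A : Finset (Fin n₁)) (B : Finset (Fin n₂)), A.card = s ∧ B.card = t ∧
    ∀ a ∈ A, ∀ b ∈ B, ∀ a' ∈ A, ∀ b' ∈ B, (a, b) ≠ (a', b') → c (a, b) ≠ c (a', b')

/-- `f` maps the configuration `K ⊆ E^m` to a congruent copy of itself in `E^d`: it preserves
all pairwise distances between points of `K` (hence is injective on `K`). -/
def IsCongruentCopy {m d : ℕ} (K : Set (EuclideanSpace ℝ (Fin m)))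
    (f : EuclideanSpace ℝ (Fin m) → EuclideanSpace ℝ (Fin d)) : Prop :=
  ∀ x ∈ K, ∀ y ∈ K, dist (f x) (f y) = dist x y

/-- The coloring `χ` of `E^d` contains a monochromatic congruent copy of `K ⊆ E^m`. -/
def HasMonoCopy {r m d : ℕ} (χ : EuclideanSpace ℝ (Fin d) → Fin r)
    (K : Set (EuclideanSpace ℝ (Fin m))) : Prop :=
  ∃ f, IsCongruentCopy K f ∧ ∃ col : Fin r, ∀ x ∈ K, χ (f x) = col

/-- The coloring `χ` of `E^d` contains a rainbow congruent copy of `K ⊆ E^m`. -/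
def HasRainbowCopy {r m d : ℕ} (χ : EuclideanSpace ℝ (Fin d) → Fin r)
    (K : Set (EuclideanSpace ℝ (Fin m))) : Prop :=
  ∃ f, IsCongruentCopy K f ∧ ∀ x ∈ K, ∀ y ∈ K, x ≠ y → χ (f x) ≠ χ (f y)

/-- The vertex set of a regular `(s-1)`-dimensional simplex with side length `a`, realized in
`E^s` as the set of points with exactly one nonzero coordinate, equal to `a/√2`. -/
def simplexVertices (s : ℕ) (a : ℝ) : Set (EuclideanSpace ℝ (Fin s)) :=
  Set.range fun i : Fin s => EuclideanSpace.single i (a / Real.sqrt 2)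

/-- The Cartesian product `K₁ ∗ K₂ ⊆ E^{m₁+m₂}` of configurations `K₁ ⊆ E^{m₁}` and
`K₂ ⊆ E^{m₂}`. -/
def cartesianProd {m₁ m₂ : ℕ} (K₁ : Set (EuclideanSpace ℝ (Fin m₁)))
    (K₂ : Set (EuclideanSpace ℝ (Fin m₂))) : Set (EuclideanSpace ℝ (Fin (m₁ + m₂))) :=
  {z | ∃ x ∈ K₁, ∃ y ∈ K₂,
    (∀ i : Fin m₁, z (Fin.castAdd m₂ i) = x i) ∧ (∀ j : Fin m₂, z (Fin.natAdd m₁ j) = y j)}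

/-- The "grid point" of the product of two simplices. -/
noncomputable def pt (s t : ℕ) (a b : ℝ) (i : Fin s) (j : Fin t) :
    EuclideanSpace ℝ (Fin (s + t)) :=
  WithLp.toLp 2 fun k => (Fin.addCases (fun i' => if i' = i then a / Real.sqrt 2 else 0)
    (fun j' => if j' = j then b / Real.sqrt 2 else 0) k : ℝ)

noncomputable def embed {s t n₁ n₂ : ℕ} (α : Fin s → Fin n₁) (β : Fin t → Fin n₂)
    (z : EuclideanSpace ℝ (Fin (s + t))) : EuclideanSpace ℝ (Fin (n₁ + n₂)) :=
  WithLp.toLp 2 fun k => (Fin.addCases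
    (fun u => if h : ∃ i, α i = u then z (Fin.castAdd t h.choose) else 0)
    (fun v => if h : ∃ j, β j = v then z (Fin.natAdd s h.choose) else 0) k : ℝ)

lemma pt_left {s t : ℕ} (a b : ℝ) (i : Fin s) (j : Fin t) (i' : Fin s) :
    pt s t a b i j (Fin.castAdd t i') = if i' = i then a / Real.sqrt 2 else 0 := by
  simp [pt]

lemma pt_right {s t : ℕ} (a b : ℝ) (i : Fin s) (j : Fin t) (j' : Fin t) :
    pt s t a b i j (Fin.natAdd s j') = if j' = j then b / Real.sqrt 2 else 0 := by
  simp [pt]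

lemma embed_left {s t n₁ n₂ : ℕ} (α : Fin s → Fin n₁) (β : Fin t → Fin n₂)
    (z : EuclideanSpace ℝ (Fin (s + t))) (u : Fin n₁) :
    embed α β z (Fin.castAdd n₂ u) =
      if h : ∃ i, α i = u then z (Fin.castAdd t h.choose) else 0 := by
  simp [embed]

lemma embed_right {s t n₁ n₂ : ℕ} (α : Fin s → Fin n₁) (β : Fin t → Fin n₂)
    (z : EuclideanSpace ℝ (Fin (s + t))) (v : Fin n₂) :
    embed α β z (Fin.natAdd n₁ v) =
      if h : ∃ j, β j = v then z (Fin.natAdd s h.choose) else 0 := by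
  simp [embed]

lemma embed_left_apply {s t n₁ n₂ : ℕ} {α : Fin s → Fin n₁} (β : Fin t → Fin n₂)
    (hα : Function.Injective α) (z : EuclideanSpace ℝ (Fin (s + t))) (i : Fin s) :
    embed α β z (Fin.castAdd n₂ (α i)) = z (Fin.castAdd t i) := by
  have h : ∃ i', α i' = α i := ⟨i, rfl⟩
  rw [embed_left, dif_pos h, hα h.choose_spec]

lemma embed_right_apply {s t n₁ n₂ : ℕ} (α : Fin s → Fin n₁) {β : Fin t → Fin n₂}
    (hβ : Function.Injective β) (z : EuclideanSpace ℝ (Fin (s + t))) (j : Fin t) :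
    embed α β z (Fin.natAdd n₁ (β j)) = z (Fin.natAdd s j) := by
  have h : ∃ j', β j' = β j := ⟨j, rfl⟩
  rw [embed_right, dif_pos h, hβ h.choose_spec]

lemma sum_eq_sum_comp {s n : ℕ} {α : Fin s → Fin n} (hα : Function.Injective α)
    (F : Fin n → ℝ) (hF : ∀ u, (∀ i, α i ≠ u) → F u = 0) :
    ∑ u : Fin n, F u = ∑ i : Fin s, F (α i) := by
  have h1 : ∑ u ∈ Finset.univ.image α, F u = ∑ i : Fin s, F (α i) :=
    Finset.sum_image fun x _ y _ h => hα h
  have h2 : ∑ u ∈ Finset.univ.image α, F u = ∑ u : Fin n, F u :=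
    Finset.sum_subset (Finset.subset_univ _) fun u _ hu =>
      hF u fun i hi => hu (Finset.mem_image.2 ⟨i, Finset.mem_univ i, hi⟩)
  rw [← h2, h1]

lemma embed_dist {s t n₁ n₂ : ℕ} {α : Fin s → Fin n₁} {β : Fin t → Fin n₂}
    (hα : Function.Injective α) (hβ : Function.Injective β)
    (x y : EuclideanSpace ℝ (Fin (s + t))) :
    dist (embed α β x) (embed α β y) = dist x y := by
  rw [EuclideanSpace.dist_eq, EuclideanSpace.dist_eq]
  congr 1
  rw [Fin.sum_univ_add (f := fun k => dist (embed α β x k) (embed α β y k) ^ 2),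
      Fin.sum_univ_add (f := fun k => dist (x k) (y k) ^ 2)]
  congr 1
  · rw [sum_eq_sum_comp hα
      (fun u => dist (embed α β x (Fin.castAdd n₂ u)) (embed α β y (Fin.castAdd n₂ u)) ^ 2)]
    · exact Finset.sum_congr rfl fun i _ => by
        rw [embed_left_apply β hα, embed_left_apply β hα]
    · intro u hu
      have h : ¬ ∃ i, α i = u := by push_neg; exact hu
      rw [embed_left, embed_left, dif_neg h, dif_neg h]
      simp
  · rw [sum_eq_sum_comp hβ
      (fun v => dist (embed α β x (Fin.natAdd n₁ v)) (embed α β y (Fin.natAdd n₁ v)) ^ 2)]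
    · exact Finset.sum_congr rfl fun j _ => by
        rw [embed_right_apply α hβ, embed_right_apply α hβ]
    · intro v hv
      have h : ¬ ∃ j, β j = v := by push_neg; exact hv
      rw [embed_right, embed_right, dif_neg h, dif_neg h]
      simp

lemma mem_K_iff {s t : ℕ} {a b : ℝ} (z : EuclideanSpace ℝ (Fin (s + t))) :
    z ∈ cartesianProd (simplexVertices s a) (simplexVertices t b) ↔
      ∃ i j, z = pt s t a b i j := by
  constructor
  · rintro ⟨x, ⟨i, rfl⟩, y, ⟨j, rfl⟩, h1, h2⟩
    refine ⟨i, j, PiLp.ext fun k => ?_⟩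
    induction k using Fin.addCases with
    | left u => rw [h1 u, pt_left]; simp [EuclideanSpace.single_apply]
    | right v => rw [h2 v, pt_right]; simp [EuclideanSpace.single_apply]
  · rintro ⟨i, j, rfl⟩
    exact ⟨EuclideanSpace.single i (a / Real.sqrt 2), ⟨i, rfl⟩,
      EuclideanSpace.single j (b / Real.sqrt 2), ⟨j, rfl⟩,
      fun i' => by rw [pt_left]; simp [EuclideanSpace.single_apply],
      fun j' => by rw [pt_right]; simp [EuclideanSpace.single_apply]⟩

lemma embed_pt {s t n₁ n₂ : ℕ} {α : Fin s → Fin n₁} {β : Fin t → Fin n₂}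
    (hα : Function.Injective α) (hβ : Function.Injective β) (a b : ℝ)
    (i : Fin s) (j : Fin t) :
    embed α β (pt s t a b i j) = pt n₁ n₂ a b (α i) (β j) := by
  refine PiLp.ext fun k => ?_
  induction k using Fin.addCases with
  | left u =>
    rw [pt_left]
    by_cases hui : u = α i
    · subst hui
      rw [embed_left_apply β hα, pt_left, if_pos rfl, if_pos rfl]
    · rw [if_neg hui, embed_left]
      by_cases hu : ∃ i', α i' = u
      · rw [dif_pos hu, pt_left, if_neg]
        intro he
        exact hui (by rw [← hu.choose_spec, he])
      · rw [dif_neg hu]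
  | right v =>
    rw [pt_right]
    by_cases hvj : v = β j
    · subst hvj
      rw [embed_right_apply α hβ, pt_right, if_pos rfl, if_pos rfl]
    · rw [if_neg hvj, embed_right]
      by_cases hv : ∃ j', β j' = v
      · rw [dif_pos hv, pt_right, if_neg]
        intro he
        exact hvj (by rw [← hv.choose_spec, he])
      · rw [dif_neg hv]

/-- Translation lemma: suppose every `r`-coloring of `K_{n₁,n₂}` contains a rainbow
`K_{s₁,t₁}` or a monochromatic `K_{s₂,t₂}` (with the `s`-sides in the part of size `n₁`).
Let `S₁ ⊆ E^{s₁+t₁}` be the Cartesian product of the vertex sets of a regular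
`(s₁-1)`-simplex of side length `a` and a regular `(t₁-1)`-simplex of side length `b`, and
define `S₂ ⊆ E^{s₂+t₂}` similarly. Then every `r`-coloring of `E^{n₁+n₂}` contains a
rainbow congruent copy of `S₁` or a monochromatic congruent copy of `S₂`. -/
theorem translation_lemma (r n₁ n₂ s₁ t₁ s₂ t₂ : ℕ) (hr : 0 < r) (hn₁ : 0 < n₁)
    (hn₂ : 0 < n₂) (hs₁ : 0 < s₁) (ht₁ : 0 < t₁) (hs₂ : 0 < s₂) (ht₂ : 0 < t₂)
    (a b : ℝ) (ha : 0 < a) (hb : 0 < b)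
    (hgraph : ∀ c : Fin n₁ × Fin n₂ → Fin r, HasRainbowKst c s₁ t₁ ∨ HasMonoKst c s₂ t₂)
    (χ : EuclideanSpace ℝ (Fin (n₁ + n₂)) → Fin r) :
    HasRainbowCopy χ (cartesianProd (simplexVertices s₁ a) (simplexVertices t₁ b)) ∨
    HasMonoCopy χ (cartesianProd (simplexVertices s₂ a) (simplexVertices t₂ b)) := by
  rcases hgraph (fun p => χ (pt n₁ n₂ a b p.1 p.2)) with
    ⟨A, B, hA, hB, hrb⟩ | ⟨A, B, hA, hB, hm⟩
  · left
    have hα : Function.Injective ⇑(A.orderEmbOfFin hA) := (A.orderEmbOfFin hA).injective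
    have hβ : Function.Injective ⇑(B.orderEmbOfFin hB) := (B.orderEmbOfFin hB).injective
    refine ⟨embed (A.orderEmbOfFin hA) (B.orderEmbOfFin hB),
      fun x _ y _ => embed_dist hα hβ x y, ?_⟩
    intro x hx y hy hxy
    obtain ⟨i, j, rfl⟩ := (mem_K_iff x).mp hx
    obtain ⟨i', j', rfl⟩ := (mem_K_iff y).mp hy
    rw [embed_pt hα hβ, embed_pt hα hβ]
    refine hrb (A.orderEmbOfFin hA i) (A.orderEmbOfFin_mem hA i)
      (B.orderEmbOfFin hB j) (B.orderEmbOfFin_mem hB j)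
      (A.orderEmbOfFin hA i') (A.orderEmbOfFin_mem hA i')
      (B.orderEmbOfFin hB j') (B.orderEmbOfFin_mem hB j') ?_
    intro he
    apply hxy
    have h1 : i = i' := hα (congrArg Prod.fst he)
    have h2 : j = j' := hβ (congrArg Prod.snd he)
    rw [h1, h2]
  · right
    have hα : Function.Injective ⇑(A.orderEmbOfFin hA) := (A.orderEmbOfFin hA).injective
    have hβ : Function.Injective ⇑(B.orderEmbOfFin hB) := (B.orderEmbOfFin hB).injective
    refine ⟨embed (A.orderEmbOfFin hA) (B.orderEmbOfFin hB),
      fun x _ y _ => embed_dist hα hβ x y, ?_⟩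
    have i0 : Fin s₂ := ⟨0, hs₂⟩
    have j0 : Fin t₂ := ⟨0, ht₂⟩
    refine ⟨χ (pt n₁ n₂ a b (A.orderEmbOfFin hA i0) (B.orderEmbOfFin hB j0)), ?_⟩
    intro x hx
    obtain ⟨i, j, rfl⟩ := (mem_K_iff x).mp hx
    rw [embed_pt hα hβ]
    exact hm (A.orderEmbOfFin hA i) (A.orderEmbOfFin_mem hA i)
      (B.orderEmbOfFin hB j) (B.orderEmbOfFin_mem hB j)
      (A.orderEmbOfFin hA i0) (A.orderEmbOfFin_mem hA i0)
      (B.orderEmbOfFin hB j0) (B.orderEmbOfFin_mem hB j0)
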